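/- For every real ε > 0, there exists a finite set P of distinct points in ℝ² such that the average, over all subsets R with ∅ ≠ R ⊊ P, of (mst(R) + mst(P \ R))/mst(P), is greater than (3 + 2√3)/3 − ε. -/

import Mathlib

open scoped Classical

section GraphCost

variable {V : Type*} {X : Type*} [MetricSpace X]

noncomputable def ewt (f : V → X) : Sym2 V → ℝ :=
  Sym2.lift ⟨fun u v => dist (f u) (f v), fun u v => dist_comm (f u) (f v)⟩

lemma ewt_mk (f : V → X) (u v : V) : ewt f s(u, v) = dist (f u) (f v) := rfl

lemma ewt_nonneg (f : V → X) (e : Sym2 V) : 0 ≤ ewt f e := by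
  induction e using Sym2.ind with
  | _ u v => exact dist_nonneg

noncomputable def gcost (f : V → X) (G : SimpleGraph V) : ℝ :=
  ∑ᶠ e ∈ G.edgeSet, ewt f e

lemma gcost_eq [Finite V] (f : V → X) (G : SimpleGraph V) :
    gcost f G = ∑ e ∈ (G.edgeSet.toFinite).toFinset, ewt f e := by
  rw [gcost, ← finsum_mem_coe_finset, Set.Finite.coe_toFinset]

lemma gcost_nonneg [Finite V] (f : V → X) (G : SimpleGraph V) : 0 ≤ gcost f G := by
  rw [gcost_eq]
  exact Finset.sum_nonneg fun e _ => ewt_nonneg f e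

lemma gcost_mono [Finite V] (f : V → X) {G H : SimpleGraph V} (h : G ≤ H) :
    gcost f G ≤ gcost f H := by
  rw [gcost_eq, gcost_eq]
  apply Finset.sum_le_sum_of_subset_of_nonneg
  · intro e he
    rw [Set.Finite.mem_toFinset] at he ⊢
    exact SimpleGraph.edgeSet_mono h he
  · exact fun e _ _ => ewt_nonneg f e

lemma sum_edges_le_gcost [Finite V] (f : V → X) {G : SimpleGraph V} {l : List (Sym2 V)}
    (hl : l.Nodup) (hsub : ∀ e ∈ l, e ∈ G.edgeSet) :
    (l.map (ewt f)).sum ≤ gcost f G := by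
  classical
  rw [gcost_eq, ← List.sum_toFinset _ hl]
  apply Finset.sum_le_sum_of_subset_of_nonneg
  · intro e he
    rw [List.mem_toFinset] at he
    rw [Set.Finite.mem_toFinset]
    exact hsub e he
  · exact fun e _ _ => ewt_nonneg f e

lemma dist_le_walk_sum (f : V → X) {G : SimpleGraph V} {u v : V} (p : G.Walk u v) :
    dist (f u) (f v) ≤ (p.edges.map (ewt f)).sum := by
  induction p with
  | nil => simp
  | @cons u b v h q ih =>
      rw [SimpleGraph.Walk.edges_cons, List.map_cons, List.sum_cons, ewt_mk]
      calc dist (f u) (f v) ≤ dist (f u) (f b) + dist (f b) (f v) := dist_triangle _ _ _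
        _ ≤ dist (f u) (f b) + (q.edges.map (ewt f)).sum := by linarith

end GraphCost


section Median
variable {V : Type*} {X : Type*} [MetricSpace X]

lemma exists_avoiding_walk {G : SimpleGraph V} {a b z x : V} (p : G.Walk a b) (q : G.Walk z x)
    (hx : x ∈ p.support) : ∃ m, m ∈ p.support ∧ ∃ r : G.Walk z m, ∀ e ∈ r.edges, e ∉ p.edges := by
  induction q with
  | nil => exact ⟨_, hx, SimpleGraph.Walk.nil, by simp⟩
  | @cons u w x h q ih =>
      by_cases hu : u ∈ p.support
      · exact ⟨u, hu, SimpleGraph.Walk.nil, by simp⟩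
      · obtain ⟨m, hm, r, hr⟩ := ih hx
        refine ⟨m, hm, SimpleGraph.Walk.cons h r, ?_⟩
        intro e he
        rw [SimpleGraph.Walk.edges_cons, List.mem_cons] at he
        rcases he with rfl | he
        · exact fun hmem => hu (p.fst_mem_support_of_mem_edges hmem)
        · exact hr e he

lemma exists_median [Finite V] (f : V → X) {G : SimpleGraph V} (hG : G.Connected)
    (x y z : V) :
    ∃ m : V, dist (f x) (f m) + dist (f y) (f m) + dist (f z) (f m) ≤ gcost f G := by
  obtain ⟨w0⟩ := hG.preconnected x y
  obtain ⟨q0⟩ := hG.preconnected z x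
  set p : G.Walk x y := (w0.toPath : G.Walk x y) with hp
  have hpath : p.IsPath := w0.toPath.2
  have hx : x ∈ p.support := p.start_mem_support
  obtain ⟨m, hm, r, hr⟩ := exists_avoiding_walk p q0 hx
  refine ⟨m, ?_⟩
  set r' : G.Walk z m := r.bypass with hr'def
  have hr'path : r'.IsPath := r.bypass_isPath
  have hr' : ∀ e ∈ r'.edges, e ∉ p.edges := fun e he =>
    hr e (SimpleGraph.Walk.edges_bypass_subset r he)
  have hnodup : (p.edges ++ r'.edges).Nodup := by
    rw [List.nodup_append]
    exact ⟨hpath.isTrail.edges_nodup, hr'path.isTrail.edges_nodup,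
      fun e hep e' her heq => hr' e' her (heq ▸ hep)⟩
  have hsub : ∀ e ∈ p.edges ++ r'.edges, e ∈ G.edgeSet := by
    intro e he
    rcases List.mem_append.mp he with he | he
    · exact p.edges_subset_edgeSet he
    · exact r'.edges_subset_edgeSet he
  have hsum := sum_edges_le_gcost f hnodup hsub
  rw [List.map_append, List.sum_append] at hsum
  have hsplit : p.edges = (p.takeUntil m hm).edges ++ (p.dropUntil m hm).edges := by
    rw [← SimpleGraph.Walk.edges_append, SimpleGraph.Walk.take_spec]
  have h1 : dist (f x) (f m) ≤ ((p.takeUntil m hm).edges.map (ewt f)).sum :=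
    dist_le_walk_sum f _
  have h2 : dist (f m) (f y) ≤ ((p.dropUntil m hm).edges.map (ewt f)).sum :=
    dist_le_walk_sum f _
  have h3 : dist (f z) (f m) ≤ (r'.edges.map (ewt f)).sum := dist_le_walk_sum f r'
  have hpe : (p.edges.map (ewt f)).sum
      = ((p.takeUntil m hm).edges.map (ewt f)).sum
        + ((p.dropUntil m hm).edges.map (ewt f)).sum := by
    rw [hsplit, List.map_append, List.sum_append]
  have hcy : dist (f y) (f m) = dist (f m) (f y) := dist_comm _ _
  linarith
end Median
section SpanningTree
open SimpleGraph
variable {V : Type*}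

lemma exists_tree_le_aux [Fintype V] :
    ∀ (n : ℕ) (H : SimpleGraph V), H.edgeSet.ncard = n → H.Connected →
      ∃ G : SimpleGraph V, G.IsTree ∧ G ≤ H := by
  intro n
  induction n using Nat.strong_induction_on with
  | _ n ih =>
    intro H hn hH
    by_cases hac : H.IsAcyclic
    · exact ⟨H, ⟨hH, hac⟩, le_rfl⟩
    · rw [SimpleGraph.IsAcyclic] at hac
      push_neg at hac
      obtain ⟨v, c, hc⟩ := hac
      cases c with
      | nil => exact absurd hc (SimpleGraph.Walk.IsCycle.not_of_nil)
      | @cons _ w _ hadj q =>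
        have hmem : s(v, w) ∈ (SimpleGraph.Walk.cons hadj q).edges := by
          rw [SimpleGraph.Walk.edges_cons]; exact List.mem_cons_self
        have hreach : (H \ fromEdgeSet {s(v, w)}).Reachable v w :=
          (SimpleGraph.adj_and_reachable_delete_edges_iff_exists_cycle.mpr
            ⟨v, _, hc, hmem⟩).2
        set H' := H \ fromEdgeSet {s(v, w)} with hH'
        have hestep : ∀ {α β : V}, H.Adj α β → s(α, β) ≠ s(v, w) → H'.Adj α β := by
          intro α β hadj' hne
          rw [hH', SimpleGraph.sdiff_adj]
          refine ⟨hadj', ?_⟩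
          rw [SimpleGraph.fromEdgeSet_adj]
          rintro ⟨h1, -⟩
          exact hne (Set.mem_singleton_iff.mp h1)
        have key : ∀ {α β : V}, H.Walk α β → H'.Reachable α β := by
          intro α β wk
          induction wk with
          | nil => exact SimpleGraph.Reachable.refl _
          | @cons u b _ ha qq ihq =>
            refine SimpleGraph.Reachable.trans ?_ ihq
            by_cases he : s(u, b) = s(v, w)
            · rw [Sym2.eq_iff] at he
              rcases he with ⟨rfl, rfl⟩ | ⟨rfl, rfl⟩
              · exact hreach
              · exact hreach.symm
            · exact (hestep ha he).reachable
        have hne : Nonempty V := ⟨v⟩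
        have hconn' : H'.Connected := by
          refine SimpleGraph.Connected.mk fun α β => ?_
          obtain ⟨wk⟩ := hH.preconnected α β
          exact key wk
        have hssub : H'.edgeSet ⊂ H.edgeSet := by
          constructor
          · rw [hH', SimpleGraph.edgeSet_sdiff]
            exact Set.diff_subset
          · intro hsub
            have h1 : s(v, w) ∈ H.edgeSet := hadj
            have h2 := hsub h1
            rw [hH', SimpleGraph.edgeSet_sdiff, Set.mem_diff,
              SimpleGraph.edgeSet_fromEdgeSet] at h2
            exact h2.2 ⟨rfl, by simp [Sym2.mk_isDiag_iff, hadj.ne]⟩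
        have hcard : H'.edgeSet.ncard < n := by
          rw [← hn]
          exact Set.ncard_lt_ncard hssub (H.edgeSet.toFinite)
        obtain ⟨G, hG, hle⟩ := ih _ hcard H' rfl hconn'
        exact ⟨G, hG, hle.trans sdiff_le⟩

lemma exists_tree_le [Finite V] {H : SimpleGraph V} (hH : H.Connected) :
    ∃ G : SimpleGraph V, G.IsTree ∧ G ≤ H := by
  have : Fintype V := Fintype.ofFinite V
  exact exists_tree_le_aux _ H rfl hH
end SpanningTree
/-- The length of a minimum spanning tree of a finite point set `S` in a metric space:
the infimum, over all trees with vertex set `S`, of the sum of distances over the edges. -/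
noncomputable def mst {X : Type*} [MetricSpace X] (S : Finset X) : ℝ :=
  sInf {c : ℝ | ∃ G : SimpleGraph S, G.IsTree ∧
    c = ∑ᶠ e ∈ G.edgeSet,
      Sym2.lift ⟨fun (u v : S) => dist (u : X) (v : X), fun _ _ => dist_comm _ _⟩ e}

section MstLemmas
variable {X : Type*} [MetricSpace X]

def mstSet (S : Finset X) : Set ℝ :=
  {c : ℝ | ∃ G : SimpleGraph S, G.IsTree ∧ c = gcost (fun v : S => (v : X)) G}

lemma mst_eq (S : Finset X) : mst S = sInf (mstSet S) := rfl

lemma mstSet_nonneg (S : Finset X) : ∀ c ∈ mstSet S, 0 ≤ c := by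
  rintro c ⟨G, -, rfl⟩
  exact gcost_nonneg _ G

lemma mstSet_bddBelow (S : Finset X) : BddBelow (mstSet S) :=
  ⟨0, fun c hc => mstSet_nonneg S c hc⟩

lemma mst_nonneg (S : Finset X) : 0 ≤ mst S := by
  rw [mst_eq]
  exact Real.sInf_nonneg (mstSet_nonneg S)

lemma mstSet_nonempty (S : Finset X) (hS : S.Nonempty) : (mstSet S).Nonempty := by
  obtain ⟨x, hx⟩ := hS
  have : Nonempty S := ⟨⟨x, hx⟩⟩
  obtain ⟨G, hG, -⟩ := exists_tree_le (SimpleGraph.connected_top (V := S))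
  exact ⟨_, G, hG, rfl⟩

lemma mst_le_gcost (S : Finset X) (H : SimpleGraph S) (hH : H.Connected) :
    mst S ≤ gcost (fun v : S => (v : X)) H := by
  obtain ⟨G, hG, hle⟩ := exists_tree_le hH
  rw [mst_eq]
  calc sInf (mstSet S) ≤ gcost (fun v : S => (v : X)) G :=
        csInf_le (mstSet_bddBelow S) ⟨G, hG, rfl⟩
    _ ≤ _ := gcost_mono _ hle

lemma le_mst (S : Finset X) {x y z : X} (hx : x ∈ S) (hy : y ∈ S) (hz : z ∈ S) {B : ℝ}
    (hB : ∀ w ∈ S, B ≤ dist x w + dist y w + dist z w) : B ≤ mst S := by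
  rw [mst_eq]
  apply le_csInf (mstSet_nonempty S ⟨x, hx⟩)
  rintro c ⟨G, hG, rfl⟩
  obtain ⟨m, hm⟩ := exists_median (fun v : S => (v : X)) hG.isConnected ⟨x, hx⟩ ⟨y, hy⟩ ⟨z, hz⟩
  exact le_trans (hB (m : X) m.2) hm

lemma le_mst_pair (S : Finset X) {x y : X} (hx : x ∈ S) (hy : y ∈ S) {B : ℝ}
    (hB : ∀ w ∈ S, B ≤ dist x w + dist y w) : B ≤ mst S := by
  apply le_mst S hx hy hx (B := B)
  intro w hw
  have := hB w hw
  have h0 : (0 : ℝ) ≤ dist x w := dist_nonneg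
  linarith

lemma sum_image_le_of_nonneg {α β : Type*} [DecidableEq β] (s : Finset α) (g : α → β)
    (f : β → ℝ) (hf : ∀ b, 0 ≤ f b) : ∑ b ∈ s.image g, f b ≤ ∑ a ∈ s, f (g a) := by
  induction s using Finset.induction_on with
  | empty => simp
  | @insert a s ha ih =>
      rw [Finset.image_insert, Finset.sum_insert ha]
      by_cases hmem : g a ∈ s.image g
      · rw [Finset.insert_eq_self.mpr hmem]
        have := hf (g a)
        linarith
      · rw [Finset.sum_insert hmem]
        linarith

lemma mst_le_parent (S : Finset X) (pf : X → X) (hmem : ∀ x ∈ S, pf x ∈ S)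
    (r : X) (hr : r ∈ S) (hpar : ∀ x ∈ S, pf (pf x) = r) :
    mst S ≤ ∑ x ∈ S, dist x (pf x) := by
  classical
  have hne : Nonempty S := ⟨⟨r, hr⟩⟩
  set par : S → S := fun v => ⟨pf (v : X), hmem _ v.2⟩ with hpardef
  set H : SimpleGraph S := SimpleGraph.fromEdgeSet (Set.range fun v : S => s(v, par v)) with hHdef
  have hadjr : ∀ v : S, H.Reachable v (par v) := by
    intro v
    by_cases hv : v = par v
    · rw [← hv]
    · refine SimpleGraph.Adj.reachable ?_
      rw [hHdef, SimpleGraph.fromEdgeSet_adj]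
      exact ⟨⟨v, rfl⟩, hv⟩
  have hroot : ∀ v : S, H.Reachable v ⟨r, hr⟩ := by
    intro v
    have h2 : par (par v) = ⟨r, hr⟩ := Subtype.ext (hpar _ v.2)
    exact ((hadjr v).trans (hadjr (par v))).trans (h2 ▸ SimpleGraph.Reachable.refl _)
  have hconn : H.Connected :=
    SimpleGraph.Connected.mk fun α β => (hroot α).trans (hroot β).symm
  calc mst S ≤ gcost (fun v : S => (v : X)) H := mst_le_gcost S H hconn
    _ ≤ ∑ e ∈ Finset.univ.image (fun v : S => s(v, par v)), ewt (fun v : S => (v : X)) e := by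
        rw [gcost_eq]
        apply Finset.sum_le_sum_of_subset_of_nonneg
        · intro e he
          rw [Set.Finite.mem_toFinset, hHdef, SimpleGraph.edgeSet_fromEdgeSet] at he
          obtain ⟨⟨v, rfl⟩, -⟩ := he
          exact Finset.mem_image_of_mem _ (Finset.mem_univ v)
        · exact fun e _ _ => ewt_nonneg _ e
    _ ≤ ∑ v : S, ewt (fun v : S => (v : X)) s(v, par v) :=
        sum_image_le_of_nonneg _ _ _ (ewt_nonneg _)
    _ = ∑ v : S, dist (v : X) (pf (v : X)) := by
        apply Finset.sum_congr rfl
        intro v _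
        rw [ewt_mk]
    _ = ∑ x ∈ S, dist x (pf x) := by
        rw [← Finset.sum_coe_sort S (fun x => dist x (pf x))]

end MstLemmas
section Geometry
open scoped RealInnerProductSpace

abbrev Epl := EuclideanSpace ℝ (Fin 2)

noncomputable def ept (x y : ℝ) : Epl := (WithLp.equiv 2 (Fin 2 → ℝ)).symm ![x, y]

lemma dist_ept (x1 y1 x2 y2 : ℝ) :
    dist (ept x1 y1) (ept x2 y2) = Real.sqrt ((x1 - x2) ^ 2 + (y1 - y2) ^ 2) := by
  rw [EuclideanSpace.dist_eq]
  congr 1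
  rw [Fin.sum_univ_two]
  have h0 : dist (ept x1 y1 0) (ept x2 y2 0) = |x1 - x2| := Real.dist_eq _ _
  have h1 : dist (ept x1 y1 1) (ept x2 y2 1) = |y1 - y2| := Real.dist_eq _ _
  rw [h0, h1, sq_abs, sq_abs]

noncomputable def va : Epl := ept 1 0
noncomputable def vb : Epl := ept (-(1/2)) (Real.sqrt 3 / 2)
noncomputable def vc : Epl := ept (-(1/2)) (-(Real.sqrt 3 / 2))

lemma zero_ept : (0 : Epl) = ept 0 0 := by
  ext i
  fin_cases i <;> rfl

lemma sq3 : Real.sqrt 3 ^ 2 = 3 := Real.sq_sqrt (by norm_num)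

lemma sqrt3_pos : 0 < Real.sqrt 3 := Real.sqrt_pos.mpr (by norm_num)

lemma norm_va : ‖va‖ = 1 := by
  rw [← dist_zero_right, dist_comm, zero_ept, va, dist_ept]
  rw [show ((0:ℝ) - 1)^2 + ((0:ℝ) - 0)^2 = 1 by ring]
  exact Real.sqrt_one

lemma norm_vb : ‖vb‖ = 1 := by
  rw [← dist_zero_right, dist_comm, zero_ept, vb, dist_ept]
  rw [show ((0:ℝ) - -(1/2))^2 + ((0:ℝ) - Real.sqrt 3 / 2)^2
      = (1/4 : ℝ) + Real.sqrt 3 ^2 / 4 by ring, sq3]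
  norm_num

lemma norm_vc : ‖vc‖ = 1 := by
  rw [← dist_zero_right, dist_comm, zero_ept, vc, dist_ept]
  rw [show ((0:ℝ) - -(1/2))^2 + ((0:ℝ) - -(Real.sqrt 3 / 2))^2
      = (1/4 : ℝ) + Real.sqrt 3 ^2 / 4 by ring, sq3]
  norm_num

lemma dist_va_vb : dist va vb = Real.sqrt 3 := by
  rw [va, vb, dist_ept]
  rw [show ((1:ℝ) - -(1/2))^2 + ((0:ℝ) - Real.sqrt 3 / 2)^2
      = (9/4 : ℝ) + Real.sqrt 3 ^2 / 4 by ring, sq3]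
  norm_num

lemma dist_va_vc : dist va vc = Real.sqrt 3 := by
  rw [va, vc, dist_ept]
  rw [show ((1:ℝ) - -(1/2))^2 + ((0:ℝ) - -(Real.sqrt 3 / 2))^2
      = (9/4 : ℝ) + Real.sqrt 3 ^2 / 4 by ring, sq3]
  norm_num

lemma dist_vb_vc : dist vb vc = Real.sqrt 3 := by
  rw [vb, vc, dist_ept]
  rw [show ((-(1/2):ℝ) - -(1/2))^2 + ((Real.sqrt 3 / 2) - -(Real.sqrt 3 / 2))^2
      = Real.sqrt 3 ^2 by ring, sq3]

lemma sum_abc : va + vb + vc = 0 := by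
  ext i
  fin_cases i
  · show (1 : ℝ) + -(1/2) + -(1/2) = 0
    norm_num
  · show (0 : ℝ) + Real.sqrt 3 / 2 + -(Real.sqrt 3 / 2) = 0
    ring

lemma fermat (w : Epl) : 3 ≤ dist va w + dist vb w + dist vc w := by
  have key : ∀ v : Epl, ‖v‖ = 1 → 1 - inner ℝ v w ≤ dist v w := by
    intro v hv
    have h1 := real_inner_le_norm (-v) (w - v)
    rw [norm_neg, hv, one_mul] at h1
    have h2 : (⟪-v, w - v⟫ : ℝ) = 1 - (⟪v, w⟫ : ℝ) := by
      rw [inner_neg_left, inner_sub_right, real_inner_self_eq_norm_sq, hv]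
      ring
    rw [h2] at h1
    rw [dist_eq_norm', ]
    exact h1
  have ha := key va norm_va
  have hb := key vb norm_vb
  have hc := key vc norm_vc
  have hsum : (⟪va, w⟫ : ℝ) + (⟪vb, w⟫ : ℝ) + (⟪vc, w⟫ : ℝ) = 0 := by
    rw [← inner_add_left, ← inner_add_left, sum_abc, inner_zero_left]
  linarith

end Geometry
section Cluster

noncomputable def clus (η : ℝ) (N : ℕ) (v : Epl) : Finset Epl :=
  (Finset.range N).image (fun i : ℕ => (1 + i * η) • v)

variable {η : ℝ} {N : ℕ} {v w x : Epl}

lemma mem_clus : x ∈ clus η N v ↔ ∃ i, i < N ∧ x = (1 + i * η) • v := by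
  simp only [clus, Finset.mem_image, Finset.mem_range]
  constructor
  · rintro ⟨i, hi, rfl⟩; exact ⟨i, hi, rfl⟩
  · rintro ⟨i, hi, rfl⟩; exact ⟨i, hi, rfl⟩

lemma clus_scal_pos (hη : 0 < η) (i : ℕ) : (0:ℝ) < 1 + i * η := by positivity

lemma norm_clus_pt (hη : 0 < η) (hv : ‖v‖ = 1) (i : ℕ) :
    ‖(1 + i * η) • v‖ = 1 + i * η := by
  rw [norm_smul, hv, mul_one, Real.norm_eq_abs, abs_of_pos (clus_scal_pos hη i)]

lemma clus_scal_inj (hη : 0 < η) {i j : ℕ} (h : (1:ℝ) + i * η = 1 + j * η) : i = j := by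
  have h2 : (i:ℝ) = j := by
    have h3 : (i:ℝ) * η = j * η := by linarith
    exact mul_right_cancel₀ hη.ne' h3
  exact_mod_cast h2

lemma clus_pt_inj (hη : 0 < η) (hv : ‖v‖ = 1) {i j : ℕ}
    (h : (1 + i * η) • v = (1 + j * η) • v) : i = j := by
  have h1 := congrArg norm h
  rw [norm_clus_pt hη hv, norm_clus_pt hη hv] at h1
  exact clus_scal_inj hη h1

lemma card_clus (hη : 0 < η) (hv : ‖v‖ = 1) : (clus η N v).card = N := by
  rw [clus, Finset.card_image_of_injOn, Finset.card_range]
  intro i _ j _ h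
  exact clus_pt_inj hη hv h

lemma zero_not_mem_clus (hη : 0 < η) (hv : ‖v‖ = 1) : (0 : Epl) ∉ clus η N v := by
  rw [mem_clus]
  rintro ⟨i, -, h⟩
  have h1 := congrArg norm h
  rw [norm_zero, norm_clus_pt hη hv] at h1
  exact absurd h1.symm (ne_of_gt (clus_scal_pos hη i))

lemma clus_disjoint (hη : 0 < η) (hv : ‖v‖ = 1) (hw : ‖w‖ = 1) (hvw : v ≠ w) :
    Disjoint (clus η N v) (clus η N w) := by
  rw [Finset.disjoint_left]
  intro x hxv hxw
  rw [mem_clus] at hxv hxw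
  obtain ⟨i, -, rfl⟩ := hxv
  obtain ⟨j, -, h⟩ := hxw
  have h1 := congrArg norm h
  rw [norm_clus_pt hη hv, norm_clus_pt hη hw] at h1
  have h2 : i = j := clus_scal_inj hη h1
  subst h2
  exact hvw (smul_right_injective Epl (ne_of_gt (clus_scal_pos hη i)) h)

lemma dist_clus_le (hη : 0 < η) (hv : ‖v‖ = 1) (hx : x ∈ clus η N v) :
    dist x v ≤ N * η := by
  rw [mem_clus] at hx
  obtain ⟨i, hi, rfl⟩ := hx
  have h1 : (1 + i * η) • v - v = ((i:ℝ) * η) • v := by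
    nth_rewrite 2 [← one_smul ℝ v]
    rw [← sub_smul]
    congr 1
    ring
  rw [dist_eq_norm, h1, norm_smul, hv, mul_one, Real.norm_eq_abs,
    abs_of_nonneg (by positivity)]
  have : (i : ℝ) ≤ N := by exact_mod_cast hi.le
  nlinarith

lemma vertex_mem_clus (hN : 1 ≤ N) : v ∈ clus η N v := by
  rw [mem_clus]
  exact ⟨0, hN, by simp⟩

end Cluster
section Main

lemma clus_parent_sum {η : ℝ} {N : ℕ} {v : Epl} (hη : 0 < η) (hv : ‖v‖ = 1) (hN : 1 ≤ N)
    (pf : Epl → Epl) (hpf_v : pf v = 0) (hpf : ∀ x ∈ clus η N v, x ≠ v → pf x = v) :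
    ∑ x ∈ clus η N v, dist x (pf x) ≤ 1 + N * (N * η) := by
  have hvmem : v ∈ clus η N v := vertex_mem_clus hN
  rw [← Finset.insert_erase hvmem, Finset.sum_insert (Finset.notMem_erase _ _)]
  have h1 : dist v (pf v) = 1 := by rw [hpf_v, dist_zero_right, hv]
  have h2 : ∑ x ∈ (clus η N v).erase v, dist x (pf x) ≤
      ((clus η N v).erase v).card • (N * η) := by
    apply Finset.sum_le_card_nsmul
    intro x hx
    have hxc := Finset.mem_of_mem_erase hx
    have hxv := Finset.ne_of_mem_erase hx
    rw [hpf x hxc hxv]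
    exact dist_clus_le hη hv hxc
  have h3 : (((clus η N v).erase v).card • (N * η) : ℝ) ≤ N * (N * η) := by
    rw [nsmul_eq_mul]
    have hcard : ((clus η N v).erase v).card ≤ N := by
      calc ((clus η N v).erase v).card ≤ (clus η N v).card := Finset.card_erase_le
        _ = N := card_clus hη hv
    have : (((clus η N v).erase v).card : ℝ) ≤ N := by exact_mod_cast hcard
    have hNη : (0:ℝ) ≤ N * η := by positivity
    nlinarith
  linarith

set_option maxHeartbeats 1000000 in
lemma main_est (N : ℕ) (hN : 1 ≤ N) (δ : ℝ) (hδ0 : 0 < δ) (hδ1 : δ ≤ 1 / 10) :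
    ∃ P : Finset Epl,
      (1 - 12 / 2 ^ N) * ((3 + 2 * Real.sqrt 3 - 7 * δ) / (3 + 3 * N * δ)) ≤
        (∑ R ∈ P.powerset.filter (fun R => R.Nonempty ∧ R ≠ P),
            (mst R + mst (P \ R)) / mst P) / ((2 : ℝ) ^ P.card - 2) := by
  have hs3 : (1:ℝ) ≤ Real.sqrt 3 := by nlinarith [sq3, Real.sqrt_nonneg 3]
  have hs3' : Real.sqrt 3 ≤ 2 := by nlinarith [sq3, Real.sqrt_nonneg 3]
  set η : ℝ := δ / (N + 1) with hηdef
  have hη : 0 < η := by positivity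
  have hNη : N * η ≤ δ := by
    rw [hηdef, ← mul_div_assoc, div_le_iff₀ (by positivity : (0:ℝ) < (N:ℝ) + 1)]
    nlinarith
  set A := clus η N va with hAdef
  set B := clus η N vb with hBdef
  set C := clus η N vc with hCdef
  -- distinctness of the three unit vectors
  have hab : va ≠ vb := by
    intro h
    have := dist_va_vb
    rw [h, dist_self] at this
    exact absurd this.symm (ne_of_gt sqrt3_pos)
  have hac : va ≠ vc := by
    intro h
    have := dist_va_vc
    rw [h, dist_self] at this
    exact absurd this.symm (ne_of_gt sqrt3_pos)
  have hbc : vb ≠ vc := by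
    intro h
    have := dist_vb_vc
    rw [h, dist_self] at this
    exact absurd this.symm (ne_of_gt sqrt3_pos)
  have hdAB : Disjoint A B := clus_disjoint hη norm_va norm_vb hab
  have hdAC : Disjoint A C := clus_disjoint hη norm_va norm_vc hac
  have hdBC : Disjoint B C := clus_disjoint hη norm_vb norm_vc hbc
  have h0A : (0:Epl) ∉ A := zero_not_mem_clus hη norm_va
  have h0B : (0:Epl) ∉ B := zero_not_mem_clus hη norm_vb
  have h0C : (0:Epl) ∉ C := zero_not_mem_clus hη norm_vc
  set P : Finset Epl := insert 0 (A ∪ B ∪ C) with hPdef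
  refine ⟨P, ?_⟩
  have h0ABC : (0:Epl) ∉ A ∪ B ∪ C := by
    rw [Finset.mem_union, Finset.mem_union]
    rintro ((h | h) | h)
    exacts [h0A h, h0B h, h0C h]
  have hcardA : A.card = N := card_clus hη norm_va
  have hcardB : B.card = N := card_clus hη norm_vb
  have hcardC : C.card = N := card_clus hη norm_vc
  have hcardABC : (A ∪ B ∪ C).card = 3 * N := by
    rw [Finset.card_union_of_disjoint (by
        rw [Finset.disjoint_union_left]; exact ⟨hdAC, hdBC⟩),
      Finset.card_union_of_disjoint hdAB, hcardA, hcardB, hcardC]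
    ring
  have hPcard : P.card = 3 * N + 1 := by
    rw [hPdef, Finset.card_insert_of_notMem h0ABC, hcardABC]
  have hAP : A ⊆ P := fun x hx =>
    Finset.mem_insert_of_mem (Finset.mem_union_left _ (Finset.mem_union_left _ hx))
  have hBP : B ⊆ P := fun x hx =>
    Finset.mem_insert_of_mem (Finset.mem_union_left _ (Finset.mem_union_right _ hx))
  have hCP : C ⊆ P := fun x hx =>
    Finset.mem_insert_of_mem (Finset.mem_union_right _ hx)
  have hvaA : va ∈ A := vertex_mem_clus hN
  have hvbB : vb ∈ B := vertex_mem_clus hN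
  have hvcC : vc ∈ C := vertex_mem_clus hN
  have h0P : (0:Epl) ∈ P := Finset.mem_insert_self _ _
  have hvaP : va ∈ P := hAP hvaA
  -- |P|-membership to cluster distance
  have hdistA : ∀ x ∈ A, dist x va ≤ δ := fun x hx =>
    le_trans (dist_clus_le hη norm_va hx) hNη
  have hdistB : ∀ x ∈ B, dist x vb ≤ δ := fun x hx =>
    le_trans (dist_clus_le hη norm_vb hx) hNη
  have hdistC : ∀ x ∈ C, dist x vc ≤ δ := fun x hx =>
    le_trans (dist_clus_le hη norm_vc hx) hNη
  -- lower bound for mst P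
  have hmstP1 : 1 ≤ mst P := by
    apply le_mst_pair P h0P hvaP
    intro w hw
    have h1 : dist (0:Epl) va ≤ dist (0:Epl) w + dist w va := dist_triangle _ _ _
    have h2 : dist (0:Epl) va = 1 := by rw [dist_comm, dist_zero_right, norm_va]
    have h3 : dist w va = dist va w := dist_comm _ _
    linarith [h1, h2.symm.le]
  have hmstP0 : (0:ℝ) < mst P := lt_of_lt_of_le one_pos hmstP1
  -- upper bound for mst P
  have hmstP2 : mst P ≤ 3 + 3 * N * δ := by
    classical
    set pf : Epl → Epl := fun x =>
      if x = va ∨ x = vb ∨ x = vc then 0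
      else if x ∈ A then va else if x ∈ B then vb else if x ∈ C then vc else 0
      with hpfdef
    have hpf_va : pf va = 0 := by simp only [hpfdef]; simp
    have hpf_vb : pf vb = 0 := by simp only [hpfdef]; simp
    have hpf_vc : pf vc = 0 := by simp only [hpfdef]; simp
    have h0va : (0:Epl) ≠ va := by
      intro h
      have := norm_va
      rw [← h, norm_zero] at this
      norm_num at this
    have h0vb : (0:Epl) ≠ vb := by
      intro h
      have := norm_vb
      rw [← h, norm_zero] at this
      norm_num at this
    have h0vc : (0:Epl) ≠ vc := by
      intro h
      have := norm_vc
      rw [← h, norm_zero] at this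
      norm_num at this
    have hpf_0 : pf 0 = 0 := by
      have hcond : ¬((0:Epl) = va ∨ (0:Epl) = vb ∨ (0:Epl) = vc) := by
        rintro (h | h | h)
        exacts [h0va h, h0vb h, h0vc h]
      simp only [hpfdef]; rw [if_neg hcond, if_neg h0A, if_neg h0B, if_neg h0C]
    have hvbA : vb ∉ A := fun h => (Finset.disjoint_left.mp hdAB) h hvbB
    have hvcA : vc ∉ A := fun h => (Finset.disjoint_left.mp hdAC) h hvcC
    have hvaB : va ∉ B := fun h => (Finset.disjoint_left.mp hdAB) hvaA h
    have hvcB : vc ∉ B := fun h => (Finset.disjoint_left.mp hdBC) h hvcC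
    have hvaC : va ∉ C := fun h => (Finset.disjoint_left.mp hdAC) hvaA h
    have hvbC : vb ∉ C := fun h => (Finset.disjoint_left.mp hdBC) hvbB h
    have hpfA : ∀ x ∈ A, x ≠ va → pf x = va := by
      intro x hx hxva
      simp only [hpfdef]
      have hcond : ¬(x = va ∨ x = vb ∨ x = vc) := by
        rintro (rfl | rfl | rfl)
        exacts [hxva rfl, hvbA hx, hvcA hx]
      rw [if_neg hcond, if_pos hx]
    have hpfB : ∀ x ∈ B, x ≠ vb → pf x = vb := by
      intro x hx hxvb
      simp only [hpfdef]
      have hcond : ¬(x = va ∨ x = vb ∨ x = vc) := by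
        rintro (rfl | rfl | rfl)
        exacts [hvaB hx, hxvb rfl, hvcB hx]
      have hxA : x ∉ A := fun h => (Finset.disjoint_left.mp hdAB) h hx
      rw [if_neg hcond, if_neg hxA, if_pos hx]
    have hpfC : ∀ x ∈ C, x ≠ vc → pf x = vc := by
      intro x hx hxvc
      simp only [hpfdef]
      have hcond : ¬(x = va ∨ x = vb ∨ x = vc) := by
        rintro (rfl | rfl | rfl)
        exacts [hvaC hx, hvbC hx, hxvc rfl]
      have hxA : x ∉ A := fun h => (Finset.disjoint_left.mp hdAC) h hx
      have hxB : x ∉ B := fun h => (Finset.disjoint_left.mp hdBC) h hx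
      rw [if_neg hcond, if_neg hxA, if_neg hxB, if_pos hx]
    have hrange : ∀ x, pf x = 0 ∨ pf x = va ∨ pf x = vb ∨ pf x = vc := by
      intro x
      simp only [hpfdef]
      by_cases h1 : x = va ∨ x = vb ∨ x = vc
      · rw [if_pos h1]; tauto
      · rw [if_neg h1]
        by_cases h2 : x ∈ A
        · rw [if_pos h2]; tauto
        · rw [if_neg h2]
          by_cases h3 : x ∈ B
          · rw [if_pos h3]; tauto
          · rw [if_neg h3]
            by_cases h4 : x ∈ C
            · rw [if_pos h4]; tauto
            · rw [if_neg h4]; tauto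
    have hmem : ∀ x ∈ P, pf x ∈ P := by
      intro x _
      rcases hrange x with h | h | h | h <;> rw [h]
      exacts [h0P, hvaP, hBP hvbB, hCP hvcC]
    have hpar : ∀ x ∈ P, pf (pf x) = 0 := by
      intro x _
      rcases hrange x with h | h | h | h <;> rw [h]
      exacts [hpf_0, hpf_va, hpf_vb, hpf_vc]
    have := mst_le_parent P pf hmem 0 h0P hpar
    refine le_trans this ?_
    rw [hPdef, Finset.sum_insert h0ABC]
    have hd0 : dist (0:Epl) (pf 0) = 0 := by rw [hpf_0, dist_self]
    have hsplit : ∑ x ∈ A ∪ B ∪ C, dist x (pf x)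
        = ∑ x ∈ A, dist x (pf x) + ∑ x ∈ B, dist x (pf x) + ∑ x ∈ C, dist x (pf x) := by
      rw [Finset.sum_union (by
          rw [Finset.disjoint_union_left]; exact ⟨hdAC, hdBC⟩),
        Finset.sum_union hdAB]
    have hsA : ∑ x ∈ A, dist x (pf x) ≤ 1 + N * (N * η) :=
      clus_parent_sum hη norm_va hN pf hpf_va hpfA
    have hsB : ∑ x ∈ B, dist x (pf x) ≤ 1 + N * (N * η) :=
      clus_parent_sum hη norm_vb hN pf hpf_vb hpfB
    have hsC : ∑ x ∈ C, dist x (pf x) ≤ 1 + N * (N * η) :=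
      clus_parent_sum hη norm_vc hN pf hpf_vc hpfC
    have hNNη : N * (N * η) ≤ N * δ := by
      have : (0:ℝ) ≤ N := Nat.cast_nonneg N
      nlinarith
    rw [hd0, hsplit]
    linarith
  -- lower bound: any set hitting all three clusters
  have L_F : ∀ S : Finset Epl, (S ∩ A).Nonempty → (S ∩ B).Nonempty → (S ∩ C).Nonempty →
      3 - 3 * δ ≤ mst S := by
    rintro S ⟨xA, hxA⟩ ⟨xB, hxB⟩ ⟨xC, hxC⟩
    rw [Finset.mem_inter] at hxA hxB hxC
    apply le_mst S hxA.1 hxB.1 hxC.1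
    intro w _
    have h1 : dist va w ≤ dist va xA + dist xA w := dist_triangle _ _ _
    have h2 : dist vb w ≤ dist vb xB + dist xB w := dist_triangle _ _ _
    have h3 : dist vc w ≤ dist vc xC + dist xC w := dist_triangle _ _ _
    have d1 : dist va xA ≤ δ := by rw [dist_comm]; exact hdistA _ hxA.2
    have d2 : dist vb xB ≤ δ := by rw [dist_comm]; exact hdistB _ hxB.2
    have d3 : dist vc xC ≤ δ := by rw [dist_comm]; exact hdistC _ hxC.2
    have hf := fermat w
    linarith
  -- lower bound: set inside the three clusters hitting all three
  have hcross : ∀ (v1 v2 x y : Epl), ‖v1‖ = 1 → ‖v2‖ = 1 → dist v1 v2 = Real.sqrt 3 →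
      x ∈ clus η N v1 → y ∈ clus η N v2 → Real.sqrt 3 - 2 * δ ≤ dist x y := by
    intro v1 v2 x y hv1 hv2 hd hx hy
    have h1 : dist v1 v2 ≤ dist v1 x + dist x y + dist y v2 := dist_triangle4 _ _ _ _
    have h2 : dist v1 x ≤ δ := by
      rw [dist_comm]; exact le_trans (dist_clus_le hη hv1 hx) hNη
    have h3 : dist y v2 ≤ δ := le_trans (dist_clus_le hη hv2 hy) hNη
    linarith [hd ▸ h1]
  have L_V : ∀ S : Finset Epl, S ⊆ A ∪ B ∪ C →
      (S ∩ A).Nonempty → (S ∩ B).Nonempty → (S ∩ C).Nonempty →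
      2 * Real.sqrt 3 - 4 * δ ≤ mst S := by
    rintro S hS ⟨xA, hxA⟩ ⟨xB, hxB⟩ ⟨xC, hxC⟩
    rw [Finset.mem_inter] at hxA hxB hxC
    apply le_mst S hxA.1 hxB.1 hxC.1
    intro w hw
    have hw' := hS hw
    rw [Finset.mem_union, Finset.mem_union] at hw'
    have hnn1 : (0:ℝ) ≤ dist xA w := dist_nonneg
    have hnn2 : (0:ℝ) ≤ dist xB w := dist_nonneg
    have hnn3 : (0:ℝ) ≤ dist xC w := dist_nonneg
    rcases hw' with (hw' | hw') | hw'
    · have c1 := hcross vb va xB w norm_vb norm_va (by rw [dist_comm]; exact dist_va_vb)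
        hxB.2 hw'
      have c2 := hcross vc va xC w norm_vc norm_va (by rw [dist_comm]; exact dist_va_vc)
        hxC.2 hw'
      linarith
    · have c1 := hcross va vb xA w norm_va norm_vb dist_va_vb hxA.2 hw'
      have c2 := hcross vc vb xC w norm_vc norm_vb (by rw [dist_comm]; exact dist_vb_vc)
        hxC.2 hw'
      linarith
    · have c1 := hcross va vc xA w norm_va norm_vc dist_va_vc hxA.2 hw'
      have c2 := hcross vb vc xB w norm_vb norm_vc dist_vb_vc hxB.2 hw'
      linarith
  -- counting
  set F := P.powerset.filter (fun R => R.Nonempty ∧ R ≠ P) with hFdef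
  set gd : Finset Epl → Prop := fun R =>
    (R ∩ A).Nonempty ∧ (A \ R).Nonempty ∧ (R ∩ B).Nonempty ∧ (B \ R).Nonempty ∧
      (R ∩ C).Nonempty ∧ (C \ R).Nonempty with hgddef
  set Gd := F.filter gd with hGddef
  set Bd := F.filter (fun R => ¬ gd R) with hBddef
  have hGdBd : Gd.card + Bd.card = F.card :=
    Finset.card_filter_add_card_filter_not _
  have hPne : P.Nonempty := ⟨0, h0P⟩
  have hFcard : F.card + 2 = 2 ^ P.card := by
    have hsplit := Finset.card_filter_add_card_filter_not
      (s := P.powerset) ( fun R => R.Nonempty ∧ R ≠ P)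
    have hneg : P.powerset.filter (fun R => ¬(R.Nonempty ∧ R ≠ P)) = {∅, P} := by
      ext R
      simp only [Finset.mem_filter, Finset.mem_powerset, Finset.mem_insert,
        Finset.mem_singleton, not_and_or, not_not, Finset.not_nonempty_iff_eq_empty]
      constructor
      · rintro ⟨hsub, h | h⟩
        · exact Or.inl h
        · exact Or.inr h
      · rintro (rfl | rfl)
        · exact ⟨Finset.empty_subset _, Or.inl rfl⟩
        · exact ⟨le_rfl, Or.inr rfl⟩
    rw [hneg] at hsplit
    have hcard2 : ({∅, P} : Finset (Finset Epl)).card = 2 := by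
      rw [Finset.card_insert_of_notMem (by
        rw [Finset.mem_singleton]
        exact fun h => hPne.ne_empty h.symm), Finset.card_singleton]
    rw [hcard2, Finset.card_powerset] at hsplit
    exact hsplit
  have hb1 : ∀ T : Finset Epl, T ⊆ P → T.card = N →
      (P.powerset.filter (fun R => R ∩ T = ∅)).card ≤ 2 ^ (2 * N + 1) := by
    intro T hTP hTc
    have hsub : P.powerset.filter (fun R => R ∩ T = ∅) ⊆ (P \ T).powerset := by
      intro R hR
      rw [Finset.mem_filter, Finset.mem_powerset] at hR
      rw [Finset.mem_powerset, Finset.subset_sdiff]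
      exact ⟨hR.1, Finset.disjoint_iff_inter_eq_empty.mpr hR.2⟩
    calc (P.powerset.filter (fun R => R ∩ T = ∅)).card ≤ (P \ T).powerset.card :=
          Finset.card_le_card hsub
      _ = 2 ^ ((P \ T).card) := Finset.card_powerset _
      _ = 2 ^ (2 * N + 1) := by
          rw [Finset.card_sdiff_of_subset hTP, hPcard, hTc]
          congr 1
          omega
  have hb2 : ∀ T : Finset Epl, T ⊆ P → T.card = N →
      (P.powerset.filter (fun R => T ⊆ R)).card ≤ 2 ^ (2 * N + 1) := by
    intro T hTP hTc
    have hinj : (P.powerset.filter (fun R => T ⊆ R)).card ≤ (P \ T).powerset.card := by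
      apply Finset.card_le_card_of_injOn (fun R => R \ T)
      · intro R hR
        rw [Finset.mem_coe, Finset.mem_filter, Finset.mem_powerset] at hR
        rw [Finset.mem_coe, Finset.mem_powerset]
        exact Finset.sdiff_subset_sdiff hR.1 le_rfl
      · intro R1 h1 R2 h2 heq
        rw [Finset.coe_filter, Set.mem_setOf_eq, Finset.mem_powerset] at h1 h2
        have e1 : R1 \ T ∪ T = R1 := Finset.sdiff_union_of_subset h1.2
        have e2 : R2 \ T ∪ T = R2 := Finset.sdiff_union_of_subset h2.2
        have heq' : R1 \ T = R2 \ T := heq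
        rw [← e1, ← e2, heq']
      
    calc (P.powerset.filter (fun R => T ⊆ R)).card ≤ (P \ T).powerset.card := hinj
      _ = 2 ^ ((P \ T).card) := Finset.card_powerset _
      _ = 2 ^ (2 * N + 1) := by
          rw [Finset.card_sdiff_of_subset hTP, hPcard, hTc]
          congr 1
          omega
  have hBdsub : Bd ⊆ (P.powerset.filter (fun R => R ∩ A = ∅))
      ∪ (P.powerset.filter (fun R => A ⊆ R))
      ∪ (P.powerset.filter (fun R => R ∩ B = ∅))
      ∪ (P.powerset.filter (fun R => B ⊆ R))
      ∪ (P.powerset.filter (fun R => R ∩ C = ∅))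
      ∪ (P.powerset.filter (fun R => C ⊆ R)) := by
    intro R hR
    rw [hBddef, Finset.mem_filter] at hR
    obtain ⟨hRF, hngd⟩ := hR
    have hRpow : R ∈ P.powerset := (Finset.mem_filter.mp hRF).1
    rw [hgddef] at hngd
    simp only [not_and_or, Finset.not_nonempty_iff_eq_empty,
      Finset.sdiff_eq_empty_iff_subset] at hngd
    simp only [Finset.mem_union, Finset.mem_filter]
    rcases hngd with h | h | h | h | h | h
    · exact Or.inl (Or.inl (Or.inl (Or.inl (Or.inl ⟨hRpow, h⟩))))
    · exact Or.inl (Or.inl (Or.inl (Or.inl (Or.inr ⟨hRpow, h⟩))))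
    · exact Or.inl (Or.inl (Or.inl (Or.inr ⟨hRpow, h⟩)))
    · exact Or.inl (Or.inl (Or.inr ⟨hRpow, h⟩))
    · exact Or.inl (Or.inr ⟨hRpow, h⟩)
    · exact Or.inr ⟨hRpow, h⟩
  have hBdcard : Bd.card ≤ 6 * 2 ^ (2 * N + 1) := by
    have h1 := hb1 A hAP hcardA
    have h2 := hb2 A hAP hcardA
    have h3 := hb1 B hBP hcardB
    have h4 := hb2 B hBP hcardB
    have h5 := hb1 C hCP hcardC
    have h6 := hb2 C hCP hcardC
    calc Bd.card ≤ _ := Finset.card_le_card hBdsub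
      _ ≤ 6 * 2 ^ (2 * N + 1) := by
          refine le_trans (Finset.card_union_le _ _) ?_
          refine le_trans (Nat.add_le_add_right (Finset.card_union_le _ _) _) ?_
          refine le_trans (Nat.add_le_add_right (Nat.add_le_add_right (Finset.card_union_le _ _) _) _) ?_
          refine le_trans (Nat.add_le_add_right (Nat.add_le_add_right (Nat.add_le_add_right
            (Finset.card_union_le _ _) _) _) _) ?_
          refine le_trans (Nat.add_le_add_right (Nat.add_le_add_right (Nat.add_le_add_right
            (Nat.add_le_add_right (Finset.card_union_le _ _) _) _) _) _) ?_
          omega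
  -- per-subset lower bound
  have hnum0 : (0:ℝ) ≤ 3 + 2 * Real.sqrt 3 - 7 * δ := by linarith
  have htermlb : ∀ R ∈ Gd,
      (3 + 2 * Real.sqrt 3 - 7 * δ) / (3 + 3 * N * δ) ≤ (mst R + mst (P \ R)) / mst P := by
    intro R hR
    rw [hGddef, Finset.mem_filter] at hR
    obtain ⟨hRF, hgd⟩ := hR
    have hRP : R ⊆ P := Finset.mem_powerset.mp (Finset.mem_filter.mp hRF).1
    obtain ⟨g1, g2, g3, g4, g5, g6⟩ := hgd
    have hq : ∀ T : Finset Epl, T ⊆ P → (T \ R).Nonempty → ((P \ R) ∩ T).Nonempty := by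
      rintro T hTP ⟨x, hx⟩
      rw [Finset.mem_sdiff] at hx
      exact ⟨x, Finset.mem_inter.mpr ⟨Finset.mem_sdiff.mpr ⟨hTP hx.1, hx.2⟩, hx.1⟩⟩
    have hq1 := hq A hAP g2
    have hq2 := hq B hBP g4
    have hq3 := hq C hCP g6
    have key : 3 + 2 * Real.sqrt 3 - 7 * δ ≤ mst R + mst (P \ R) := by
      by_cases h0 : (0:Epl) ∈ R
      · have hsub : P \ R ⊆ A ∪ B ∪ C := by
          intro x hx
          rw [Finset.mem_sdiff] at hx
          have hx1 := hx.1
          rw [hPdef, Finset.mem_insert] at hx1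
          rcases hx1 with rfl | hx1
          · exact absurd h0 hx.2
          · exact hx1
        have l1 := L_F R g1 g3 g5
        have l2 := L_V (P \ R) hsub hq1 hq2 hq3
        linarith
      · have hsub : R ⊆ A ∪ B ∪ C := by
          intro x hx
          have hx1 := hRP hx
          rw [hPdef, Finset.mem_insert] at hx1
          rcases hx1 with rfl | hx1
          · exact absurd hx h0
          · exact hx1
        have l1 := L_V R hsub g1 g3 g5
        have l2 := L_F (P \ R) hq1 hq2 hq3
        linarith
    calc (3 + 2 * Real.sqrt 3 - 7 * δ) / (3 + 3 * N * δ)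
        ≤ (3 + 2 * Real.sqrt 3 - 7 * δ) / mst P :=
          div_le_div_of_nonneg_left hnum0 hmstP0 hmstP2
      _ ≤ (mst R + mst (P \ R)) / mst P := by gcongr
  have htermnn : ∀ R ∈ F, 0 ≤ (mst R + mst (P \ R)) / mst P := by
    intro R _
    have h1 := mst_nonneg R
    have h2 := mst_nonneg (P \ R)
    exact div_nonneg (by linarith) hmstP0.le
  set t := (3 + 2 * Real.sqrt 3 - 7 * δ) / (3 + 3 * N * δ) with htdef
  have hden2 : (0:ℝ) < 3 + 3 * N * δ := by positivity
  have ht0 : 0 ≤ t := div_nonneg hnum0 hden2.le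
  have hsum1 : (Gd.card : ℝ) * t ≤ ∑ R ∈ F, (mst R + mst (P \ R)) / mst P := by
    calc (Gd.card : ℝ) * t = Gd.card • t := (nsmul_eq_mul _ _).symm
      _ ≤ ∑ R ∈ Gd, (mst R + mst (P \ R)) / mst P := Finset.card_nsmul_le_sum Gd _ t htermlb
      _ ≤ ∑ R ∈ F, (mst R + mst (P \ R)) / mst P :=
          Finset.sum_le_sum_of_subset_of_nonneg (Finset.filter_subset _ _)
            (fun R hR _ => htermnn R hR)
  have hdenpos : (0:ℝ) < 2 ^ P.card - 2 := by
    have h1 : (2:ℝ) ^ 4 ≤ 2 ^ P.card := by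
      apply pow_le_pow_right₀ one_le_two
      rw [hPcard]
      omega
    norm_num at h1
    linarith
  have hpow3 : (2:ℝ) ^ (3 * N) ≤ 2 ^ P.card - 2 := by
    rw [hPcard, pow_succ]
    have h2 : (2:ℝ) ≤ 2 ^ (3 * N) := by
      calc (2:ℝ) = 2 ^ 1 := (pow_one 2).symm
        _ ≤ 2 ^ (3 * N) := pow_le_pow_right₀ one_le_two (by omega)
    linarith
  have hFcardR : (F.card : ℝ) = 2 ^ P.card - 2 := by
    have h : ((F.card + 2 : ℕ) : ℝ) = ((2 ^ P.card : ℕ) : ℝ) := by exact_mod_cast congrArg Nat.cast hFcard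
    push_cast at h
    linarith
  have hBdR : (Bd.card : ℝ) ≤ 6 * 2 ^ (2 * N + 1) := by exact_mod_cast hBdcard
  have hGdR : (2:ℝ) ^ P.card - 2 - 6 * 2 ^ (2 * N + 1) ≤ (Gd.card : ℝ) := by
    have hc : (Gd.card : ℝ) + Bd.card = F.card := by exact_mod_cast hGdBd
    linarith
  have hratio : 1 - 12 / 2 ^ N ≤ (Gd.card : ℝ) / (2 ^ P.card - 2) := by
    have key : (6:ℝ) * 2 ^ (2 * N + 1) / (2 ^ P.card - 2) ≤ 12 / 2 ^ N := by
      rw [div_le_div_iff₀ hdenpos (by positivity)]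
      have hmul : (6:ℝ) * 2 ^ (2 * N + 1) * 2 ^ N = 12 * 2 ^ (3 * N) := by
        rw [mul_assoc, ← pow_add]
        have he : 2 * N + 1 + N = 3 * N + 1 := by omega
        rw [he, pow_succ]
        ring
      rw [hmul]
      linarith
    have h2 : ((2:ℝ) ^ P.card - 2 - 6 * 2 ^ (2 * N + 1)) / (2 ^ P.card - 2)
        ≤ (Gd.card : ℝ) / (2 ^ P.card - 2) := by gcongr
    have h3 : 1 - 6 * 2 ^ (2 * N + 1) / ((2:ℝ) ^ P.card - 2)
        = ((2:ℝ) ^ P.card - 2 - 6 * 2 ^ (2 * N + 1)) / (2 ^ P.card - 2) := by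
      field_simp
    linarith
  calc (1 - 12 / 2 ^ N) * t ≤ ((Gd.card : ℝ) / (2 ^ P.card - 2)) * t :=
        mul_le_mul_of_nonneg_right hratio ht0
    _ = ((Gd.card : ℝ) * t) / (2 ^ P.card - 2) := by ring
    _ ≤ (∑ R ∈ F, (mst R + mst (P \ R)) / mst P) / (2 ^ P.card - 2) := by gcongr

end Main
theorem exists_pointset_average_mst_ratio_large (ε : ℝ) (hε : 0 < ε) :
    ∃ P : Finset (EuclideanSpace ℝ (Fin 2)),
      (∑ R ∈ P.powerset.filter (fun R => R.Nonempty ∧ R ≠ P),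
          (mst R + mst (P \ R)) / mst P) / ((2 : ℝ) ^ P.card - 2) >
        (3 + 2 * Real.sqrt 3) / 3 - ε := by
  have hs3 : (1:ℝ) ≤ Real.sqrt 3 := by nlinarith [sq3, Real.sqrt_nonneg 3]
  have hs3' : Real.sqrt 3 ≤ 2 := by nlinarith [sq3, Real.sqrt_nonneg 3]
  obtain ⟨N0, hN0⟩ := pow_unbounded_of_one_lt (72 / ε + 72) (one_lt_two (α := ℝ))
  set N := N0 + 1 with hNdef
  have hN : 1 ≤ N := Nat.le_add_left 1 N0
  have hNR : (72:ℝ) / ε + 72 < 2 ^ N :=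
    lt_of_lt_of_le hN0 (pow_le_pow_right₀ one_le_two (Nat.le_succ N0))
  have h2Npos : (0:ℝ) < 2 ^ N := by positivity
  have hεdiv : (0:ℝ) < 72 / ε := by positivity
  set u : ℝ := 12 / 2 ^ N with hudef
  have hu0 : 0 ≤ u := by positivity
  have hu1 : u < ε / 6 := by
    rw [hudef, div_lt_div_iff₀ h2Npos (by norm_num : (0:ℝ) < 6)]
    have h72 : 72 / ε < 2 ^ N := by linarith
    rw [div_lt_iff₀ hε] at h72
    nlinarith
  have hu2 : u < 1 := by
    rw [hudef, div_lt_one h2Npos]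
    linarith
  set δ : ℝ := min (1 / 10) (ε / (9 * (N + 1))) with hδdef
  have hδ0 : 0 < δ := lt_min (by norm_num) (by positivity)
  have hδ1 : δ ≤ 1 / 10 := min_le_left _ _
  have hδ2 : δ ≤ ε / (9 * (N + 1)) := min_le_right _ _
  obtain ⟨P, hP⟩ := main_est N hN δ hδ0 hδ1
  refine ⟨P, lt_of_lt_of_le ?_ hP⟩
  set t := (3 + 2 * Real.sqrt 3 - 7 * δ) / (3 + 3 * N * δ) with htdef
  have hden2 : (0:ℝ) < 3 + 3 * N * δ := by positivity
  have hNn : (0:ℝ) ≤ N := Nat.cast_nonneg N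
  have ht3 : t ≤ 3 := by
    rw [htdef, div_le_iff₀ hden2]
    nlinarith
  have hKt : (3 + 2 * Real.sqrt 3) / 3 - (7 / 3) * δ - 3 * N * δ ≤ t := by
    rw [htdef, le_div_iff₀ hden2]
    nlinarith [mul_nonneg hNn hδ0.le, mul_nonneg (mul_nonneg hNn hNn) (mul_pos hδ0 hδ0).le]
  have hδsum : (7 / 3) * δ + 3 * N * δ ≤ ε / 3 := by
    have h1 : (7 / 3) * δ + 3 * N * δ ≤ (3 + 3 * N) * δ := by nlinarith
    have h2 : (3 + 3 * (N:ℝ)) * δ ≤ (3 + 3 * N) * (ε / (9 * (N + 1))) := by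
      apply mul_le_mul_of_nonneg_left hδ2
      positivity
    have h3 : (3 + 3 * (N:ℝ)) * (ε / (9 * (N + 1))) = ε / 3 := by
      field_simp
      ring
    linarith
  have hlow : t - 3 * u ≤ (1 - u) * t := by nlinarith
  have ht0 : 0 ≤ t := by
    rw [htdef]
    apply div_nonneg _ hden2.le
    linarith
  calc (3 + 2 * Real.sqrt 3) / 3 - ε
      < (3 + 2 * Real.sqrt 3) / 3 - (7 / 3) * δ - 3 * N * δ - 3 * u := by linarith
    _ ≤ t - 3 * u := by linarith
    _ ≤ (1 - u) * t := hlow
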